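/- Let W be a normal random variable. Then inf_{y ∈ ℝ} E[log|W² − y|] > −∞, i.e., the expectation E[log|W² − y|] is bounded below uniformly in y. -/

import Mathlib

open ProbabilityTheory MeasureTheory

noncomputable def gbase : ℝ → ℝ := fun t => 2 * Real.exp (-(1/2) * Real.log t)

lemma gbase_meas : Measurable gbase :=
  (Real.measurable_exp.comp (Real.measurable_log.const_mul (-(1/2)))).const_mul 2

lemma gbase_eq (t : ℝ) (h0 : 0 < t) : gbase t = 2 * t ^ (-(1/2):ℝ) := by
  rw [gbase, Real.rpow_def_of_pos h0, mul_comm (Real.log t)]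

noncomputable def Gaux : ℝ → ENNReal := fun t =>
  Set.indicator (Set.Ioo (0:ℝ) 1) (fun t => ENNReal.ofReal (gbase t)) t

lemma Gaux_meas : Measurable Gaux := by
  apply Measurable.indicator _ measurableSet_Ioo
  exact ENNReal.measurable_ofReal.comp gbase_meas

lemma neg_log_le (t : ℝ) (h0 : 0 < t) : -Real.log t ≤ gbase t := by
  rw [gbase_eq t h0]
  have h1 : Real.log (t ^ (-(1/2):ℝ)) = (-(1/2):ℝ) * Real.log t := Real.log_rpow h0 _
  have h2 : Real.log (t ^ (-(1/2):ℝ)) ≤ t ^ (-(1/2):ℝ) - 1 :=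
    Real.log_le_sub_one_of_pos (Real.rpow_pos_of_pos h0 _)
  linarith

lemma claim1 (u : ℝ) :
    ENNReal.ofReal (max (-Real.log |u|) 0) ≤ Gaux u + Gaux (-u) := by
  rcases le_or_gt (max (-Real.log |u|) 0) 0 with h | h
  · rw [ENNReal.ofReal_of_nonpos h]; exact zero_le
  · have hlog : Real.log |u| < 0 := by
      by_contra hc
      push_neg at hc
      have : max (-Real.log |u|) 0 = 0 := max_eq_right (by linarith)
      rw [this] at h; exact lt_irrefl 0 h
    have habs0 : 0 < |u| := by
      rcases (abs_nonneg u).lt_or_eq with h' | h'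
      · exact h'
      · exfalso; rw [← h', Real.log_zero] at hlog; exact lt_irrefl 0 hlog
    have habs1 : |u| < 1 := by
      by_contra hc
      push_neg at hc
      exact absurd (Real.log_nonneg hc) (by linarith)
    have hmax : max (-Real.log |u|) 0 = -Real.log |u| := max_eq_left (by linarith)
    have hb : -Real.log |u| ≤ gbase |u| := neg_log_le _ habs0
    have hmem : |u| ∈ Set.Ioo (0:ℝ) 1 := ⟨habs0, habs1⟩
    have hstep : ENNReal.ofReal (max (-Real.log |u|) 0)
        ≤ ENNReal.ofReal (gbase |u|) := by
      rw [hmax]; exact ENNReal.ofReal_le_ofReal hb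
    rcases lt_trichotomy u 0 with hu | hu | hu
    · have h1 : |u| = -u := abs_of_neg hu
      have hG : Gaux (-u) = ENNReal.ofReal (gbase (-u)) := by
        rw [Gaux]; exact Set.indicator_of_mem (h1 ▸ hmem) _
      refine le_trans hstep ?_
      rw [h1]
      exact hG ▸ le_add_self
    · exfalso; rw [hu, abs_zero] at habs0; exact lt_irrefl 0 habs0
    · have h1 : |u| = u := abs_of_pos hu
      have hG : Gaux u = ENNReal.ofReal (gbase u) := by
        rw [Gaux]; exact Set.indicator_of_mem (h1 ▸ hmem) _
      refine le_trans hstep ?_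
      rw [h1]
      exact hG ▸ le_self_add

lemma lintegral_Gaux : ∫⁻ t, Gaux t ≤ ENNReal.ofReal 4 := by
  have hInt : IntervalIntegrable (fun t : ℝ => 2 * t ^ (-(1/2):ℝ)) MeasureTheory.volume 0 1 := by
    have := intervalIntegral.intervalIntegrable_rpow' (a := 0) (b := 1)
      (by norm_num : (-1:ℝ) < -(1/2))
    exact this.const_mul 2
  have hIntOn : IntegrableOn (fun t : ℝ => 2 * t ^ (-(1/2):ℝ)) (Set.Ioo 0 1) := by
    rwa [intervalIntegrable_iff_integrableOn_Ioo_of_le zero_le_one] at hInt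
  have heq : Set.EqOn (fun t : ℝ => 2 * t ^ (-(1/2):ℝ)) gbase (Set.Ioo 0 1) := by
    intro t ht
    exact (gbase_eq t ht.1).symm
  have hIntOn' : IntegrableOn gbase (Set.Ioo (0:ℝ) 1) :=
    hIntOn.congr_fun heq measurableSet_Ioo
  have hval' : ∫ t in Set.Ioo (0:ℝ) 1, 2 * t ^ (-(1/2):ℝ) = 4 := by
    rw [← MeasureTheory.integral_Ioc_eq_integral_Ioo,
      ← intervalIntegral.integral_of_le zero_le_one,
      intervalIntegral.integral_const_mul,
      integral_rpow (Or.inl (by norm_num : (-1:ℝ) < -(1/2)))]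
    norm_num
  have hval : ∫ t in Set.Ioo (0:ℝ) 1, gbase t = 4 := by
    rw [← hval']
    exact MeasureTheory.setIntegral_congr_fun measurableSet_Ioo heq.symm
  have hnn : 0 ≤ᵐ[MeasureTheory.volume.restrict (Set.Ioo (0:ℝ) 1)] gbase := by
    filter_upwards [ae_restrict_mem measurableSet_Ioo] with t ht
    rw [gbase_eq t ht.1]
    have := Real.rpow_nonneg (le_of_lt ht.1) (-(1/2):ℝ)
    positivity
  have hkey := ofReal_integral_eq_lintegral_ofReal hIntOn' hnn
  unfold Gaux
  rw [lintegral_indicator measurableSet_Ioo]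
  rw [← hkey, hval]

lemma pointwise_bound (y : ℝ) :
    ∀ᵐ w : ℝ ∂MeasureTheory.volume,
      ENNReal.ofReal (max (-Real.log |w ^ 2 - y|) 0) ≤
        (Gaux (w - Real.sqrt (max y 0)) + Gaux (-(w - Real.sqrt (max y 0)))) +
        (Gaux (w + Real.sqrt (max y 0)) + Gaux (-(w + Real.sqrt (max y 0)))) := by
  set a := Real.sqrt (max y 0) with ha
  have h1 : ∀ᵐ w : ℝ ∂MeasureTheory.volume, w ≠ a := by
    rw [ae_iff]
    simp only [not_not]
    rw [show {w : ℝ | w = a} = {a} from Set.setOf_eq_eq_singleton]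
    exact measure_singleton a
  have h2 : ∀ᵐ w : ℝ ∂MeasureTheory.volume, w ≠ -a := by
    rw [ae_iff]
    simp only [not_not]
    rw [show {w : ℝ | w = -a} = {-a} from Set.setOf_eq_eq_singleton]
    exact measure_singleton (-a)
  filter_upwards [h1, h2] with w hw1 hw2
  have ha2 : a ^ 2 = max y 0 := Real.sq_sqrt (le_max_right y 0)
  have hprod : (w - a) * (w + a) = w ^ 2 - max y 0 := by rw [← ha2]; ring
  have key0 : |(w - a) * (w + a)| ≤ |w ^ 2 - y| := by
    rcases le_or_gt 0 y with hy | hy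
    · rw [hprod, max_eq_left hy]
    · rw [hprod, max_eq_right hy.le, sub_zero, abs_of_nonneg (sq_nonneg w),
        abs_of_pos (by nlinarith [sq_nonneg w] : (0:ℝ) < w ^ 2 - y)]
      linarith
  have hne1 : w - a ≠ 0 := sub_ne_zero.2 hw1
  have hne2 : w + a ≠ 0 := by
    intro hc; exact hw2 (by linarith [hc] : w = -a)
  have hne : (w - a) * (w + a) ≠ 0 := mul_ne_zero hne1 hne2
  have hpos : 0 < |(w - a) * (w + a)| := abs_pos.2 hne
  have hlogle : Real.log |(w - a) * (w + a)| ≤ Real.log |w ^ 2 - y| :=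
    Real.log_le_log hpos key0
  have hsplit : Real.log |(w - a) * (w + a)| = Real.log |w - a| + Real.log |w + a| := by
    rw [abs_mul, Real.log_mul (abs_ne_zero.2 hne1) (abs_ne_zero.2 hne2)]
  have hmax1 : max (-Real.log |w ^ 2 - y|) 0 ≤
      max (-Real.log |w - a|) 0 + max (-Real.log |w + a|) 0 := by
    have : -Real.log |w ^ 2 - y| ≤ -Real.log |w - a| + -Real.log |w + a| := by
      rw [← neg_add, ← hsplit]; linarith
    refine max_le ?_ (by positivity)
    calc -Real.log |w ^ 2 - y| ≤ -Real.log |w - a| + -Real.log |w + a| := this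
      _ ≤ max (-Real.log |w - a|) 0 + max (-Real.log |w + a|) 0 :=
        add_le_add (le_max_left _ _) (le_max_left _ _)
  calc ENNReal.ofReal (max (-Real.log |w ^ 2 - y|) 0)
      ≤ ENNReal.ofReal (max (-Real.log |w - a|) 0 + max (-Real.log |w + a|) 0) :=
        ENNReal.ofReal_le_ofReal hmax1
    _ ≤ ENNReal.ofReal (max (-Real.log |w - a|) 0) +
        ENNReal.ofReal (max (-Real.log |w + a|) 0) := ENNReal.ofReal_add_le
    _ ≤ (Gaux (w - a) + Gaux (-(w - a))) + (Gaux (w + a) + Gaux (-(w + a))) :=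
        add_le_add (claim1 (w - a)) (claim1 (w + a))

lemma lintegral_Gaux_sub (a : ℝ) :
    ∫⁻ w : ℝ, Gaux (w - a) ∂MeasureTheory.volume = ∫⁻ t, Gaux t := by
  exact lintegral_sub_right_eq_self Gaux a

lemma lintegral_Gaux_neg : ∫⁻ w : ℝ, Gaux (-w) ∂MeasureTheory.volume = ∫⁻ t, Gaux t :=
  (Measure.measurePreserving_neg (MeasureTheory.volume : Measure ℝ)).lintegral_comp Gaux_meas

lemma lintegral_Gaux_neg_sub (a : ℝ) :
    ∫⁻ w : ℝ, Gaux (-(w - a)) ∂MeasureTheory.volume = ∫⁻ t, Gaux t := by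
  have : ∫⁻ w : ℝ, (fun x => Gaux (-x)) (w - a) ∂MeasureTheory.volume
      = ∫⁻ x : ℝ, Gaux (-x) ∂MeasureTheory.volume :=
    lintegral_sub_right_eq_self (fun x => Gaux (-x)) a
  simpa [lintegral_Gaux_neg] using this

lemma lint_bound (y : ℝ) :
    ∫⁻ w : ℝ, ENNReal.ofReal (max (-Real.log |w ^ 2 - y|) 0) ∂MeasureTheory.volume
      ≤ ENNReal.ofReal 16 := by
  set a := Real.sqrt (max y 0)
  have m1 : Measurable fun w : ℝ => Gaux (w - a) :=
    Gaux_meas.comp (measurable_id.sub_const a)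
  have m2 : Measurable fun w : ℝ => Gaux (-(w - a)) :=
    Gaux_meas.comp ((measurable_id.sub_const a).neg)
  have m3 : Measurable fun w : ℝ => Gaux (w + a) :=
    Gaux_meas.comp (measurable_id.add_const a)
  have m4 : Measurable fun w : ℝ => Gaux (-(w + a)) :=
    Gaux_meas.comp ((measurable_id.add_const a).neg)
  calc ∫⁻ w : ℝ, ENNReal.ofReal (max (-Real.log |w ^ 2 - y|) 0) ∂MeasureTheory.volume
      ≤ ∫⁻ w : ℝ, ((Gaux (w - a) + Gaux (-(w - a))) + (Gaux (w + a) + Gaux (-(w + a))))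
          ∂MeasureTheory.volume := lintegral_mono_ae (pointwise_bound y)
    _ = (∫⁻ w : ℝ, Gaux (w - a) ∂MeasureTheory.volume)
        + (∫⁻ w : ℝ, Gaux (-(w - a)) ∂MeasureTheory.volume)
        + ((∫⁻ w : ℝ, Gaux (w + a) ∂MeasureTheory.volume)
        + (∫⁻ w : ℝ, Gaux (-(w + a)) ∂MeasureTheory.volume)) := by
        rw [lintegral_add_left (f := fun w => Gaux (w - a) + Gaux (-(w - a))) (m1.add m2), lintegral_add_left m1, lintegral_add_left m3]
    _ ≤ ENNReal.ofReal 4 + ENNReal.ofReal 4 + (ENNReal.ofReal 4 + ENNReal.ofReal 4) := by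
        have e1 : ∫⁻ w : ℝ, Gaux (w - a) ∂MeasureTheory.volume = ∫⁻ t, Gaux t :=
          lintegral_Gaux_sub a
        have e2 : ∫⁻ w : ℝ, Gaux (-(w - a)) ∂MeasureTheory.volume = ∫⁻ t, Gaux t :=
          lintegral_Gaux_neg_sub a
        have e3 : ∫⁻ w : ℝ, Gaux (w + a) ∂MeasureTheory.volume = ∫⁻ t, Gaux t := by
          simpa [sub_neg_eq_add] using lintegral_Gaux_sub (-a)
        have e4 : ∫⁻ w : ℝ, Gaux (-(w + a)) ∂MeasureTheory.volume = ∫⁻ t, Gaux t := by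
          simpa [sub_neg_eq_add] using lintegral_Gaux_neg_sub (-a)
        rw [e1, e2, e3, e4]
        exact add_le_add (add_le_add lintegral_Gaux lintegral_Gaux)
          (add_le_add lintegral_Gaux lintegral_Gaux)
    _ = ENNReal.ofReal 16 := by
        rw [show (16:ℝ) = 4 + 4 + (4 + 4) by norm_num,
          ENNReal.ofReal_add (by norm_num) (by norm_num),
          ENNReal.ofReal_add (by norm_num) (by norm_num)]

theorem stmt10 (m : ℝ) (v : NNReal) (hv : v ≠ 0) :
    ∃ c : ℝ, ∀ y : ℝ,
      c ≤ ∫ w, Real.log |w ^ 2 - y| ∂(gaussianReal m v) := by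
  set M : ℝ := (Real.sqrt (2 * Real.pi * v))⁻¹ with hM
  have hMnn : 0 ≤ M := by positivity
  refine ⟨-(M * 16), fun y => ?_⟩
  set μ := gaussianReal m v with hμ
  set f : ℝ → ℝ := fun w => Real.log |w ^ 2 - y| with hf
  by_cases hInt : Integrable f μ
  · -- negative part
    set g : ℝ → ℝ := fun w => max (-f w) 0 with hg
    have hgInt : Integrable g μ := hInt.neg_part
    have hgnn : 0 ≤ᵐ[μ] g := Filter.Eventually.of_forall fun w => le_max_right _ _
    have hgmeas : AEStronglyMeasurable g μ := hgInt.aestronglyMeasurable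
    -- measurability of the ENNReal-valued function
    have hFmeas : Measurable fun w : ℝ => ENNReal.ofReal (max (-Real.log |w ^ 2 - y|) 0) := by
      apply ENNReal.measurable_ofReal.comp
      exact ((Real.measurable_log.comp
        (((measurable_id.pow_const 2).sub_const y).abs)).neg.max measurable_const)
    -- lintegral bound wrt gaussian
    have hpdf_le : ∀ x : ℝ, gaussianPDF m v x ≤ ENNReal.ofReal M := by
      intro x
      rw [gaussianPDF, gaussianPDFReal]
      apply ENNReal.ofReal_le_ofReal
      have : Real.exp (-(x - m) ^ 2 / (2 * (v:ℝ))) ≤ 1 := by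
        rw [Real.exp_le_one_iff]
        have : (0:ℝ) ≤ (x - m) ^ 2 := sq_nonneg _
        have hv0 : (0:ℝ) ≤ 2 * (v:ℝ) := by positivity
        apply div_nonpos_of_nonpos_of_nonneg <;> [linarith; exact hv0]
      calc (Real.sqrt (2 * Real.pi * v))⁻¹ * Real.exp (-(x - m) ^ 2 / (2 * (v:ℝ)))
          ≤ (Real.sqrt (2 * Real.pi * v))⁻¹ * 1 := by
            apply mul_le_mul_of_nonneg_left this (by positivity)
        _ = M := by rw [mul_one]
    have hlt : ∫⁻ w, ENNReal.ofReal (max (-Real.log |w ^ 2 - y|) 0) ∂μ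
        ≤ ENNReal.ofReal (M * 16) := by
      rw [hμ, gaussianReal_of_var_ne_zero m hv,
        lintegral_withDensity_eq_lintegral_mul _ (measurable_gaussianPDF m v) hFmeas]
      calc ∫⁻ w, gaussianPDF m v w * ENNReal.ofReal (max (-Real.log |w ^ 2 - y|) 0)
            ∂MeasureTheory.volume
          ≤ ∫⁻ w, ENNReal.ofReal M * ENNReal.ofReal (max (-Real.log |w ^ 2 - y|) 0)
            ∂MeasureTheory.volume := by
            apply lintegral_mono
            intro w
            exact mul_le_mul_left (hpdf_le w) _
        _ = ENNReal.ofReal M * ∫⁻ w, ENNReal.ofReal (max (-Real.log |w ^ 2 - y|) 0)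
            ∂MeasureTheory.volume := lintegral_const_mul _ hFmeas
        _ ≤ ENNReal.ofReal M * ENNReal.ofReal 16 := mul_le_mul_right (lint_bound y) _
        _ = ENNReal.ofReal (M * 16) := by rw [← ENNReal.ofReal_mul hMnn]
    have hgint_eq : ∫ w, g w ∂μ = (∫⁻ w, ENNReal.ofReal (g w) ∂μ).toReal :=
      integral_eq_lintegral_of_nonneg_ae hgnn hgmeas
    have hgle : ∫ w, g w ∂μ ≤ M * 16 := by
      rw [hgint_eq]
      calc (∫⁻ w, ENNReal.ofReal (g w) ∂μ).toReal
          ≤ (ENNReal.ofReal (M * 16)).toReal := by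
            apply ENNReal.toReal_mono ENNReal.ofReal_ne_top
            exact hlt
        _ = M * 16 := ENNReal.toReal_ofReal (by positivity)
    have hmono : ∫ w, (-g w) ∂μ ≤ ∫ w, f w ∂μ := by
      apply integral_mono hgInt.neg hInt
      intro w
      have h1 := le_max_left (-f w) 0
      show -g w ≤ f w
      rw [hg]
      simp only
      linarith
    rw [integral_neg] at hmono
    calc -(M * 16) ≤ -∫ w, g w ∂μ := neg_le_neg hgle
      _ ≤ ∫ w, f w ∂μ := hmono
  · rw [hf] at hInt
    rw [integral_undef hInt]
    simp only [neg_nonpos]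
    positivity
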